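/- Let M_1,…,M_N be real d×d matrices and U₀ an exact joint triangularizer of {M_n}. Then for all skew-symmetric d×d matrices X and Y with ‖Y‖ = 1: |Σ_{n=1}^N Tr( low([U₀ᵀ M_n U₀, X])ᵀ · low([[U₀ᵀ M_n U₀, Y], X]) )| ≤ 8 ‖X‖² Σ_{n=1}^N ‖M_n‖², and |Σ_{n=1}^N Tr( low([[U₀ᵀ M_n U₀, X], X])ᵀ · low([U₀ᵀ M_n U₀, Y]) )| ≤ 8 ‖X‖² Σ_{n=1}^N ‖M_n‖². -/

import Mathlib

open Matrix Kronecker BigOperators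

noncomputable section

/-- Square real matrices. -/
abbrev Mat (d : ℕ) := Matrix (Fin d) (Fin d) ℝ

/-- Strictly lower-triangular part: `[low A]_{ij} = A_{ij}` if `i > j`, else `0`. -/
def lowPart {d : ℕ} (A : Mat d) : Mat d :=
  Matrix.of fun i j => if (j : ℕ) < (i : ℕ) then A i j else 0

/-- Frobenius norm. -/
def frob {m n : Type*} [Fintype m] [Fintype n] (A : Matrix m n ℝ) : ℝ :=
  Real.sqrt (∑ i, ∑ j, (A i j) ^ 2)

/-- Euclidean norm of a vector. -/
def vecNorm2 {m : Type*} [Fintype m] (v : m → ℝ) : ℝ :=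
  Real.sqrt (∑ i, (v i) ^ 2)

/-- Largest singular value. -/
def sigMax {m n : Type*} [Fintype m] [Fintype n] (A : Matrix m n ℝ) : ℝ :=
  sSup {r | ∃ x : n → ℝ, vecNorm2 x = 1 ∧ r = vecNorm2 (A.mulVec x)}

/-- Smallest singular value. -/
def sigMin {m n : Type*} [Fintype m] [Fintype n] (A : Matrix m n ℝ) : ℝ :=
  sInf {r | ∃ x : n → ℝ, vecNorm2 x = 1 ∧ r = vecNorm2 (A.mulVec x)}

/-- Spectral norm (largest singular value). -/
def specNorm {m n : Type*} [Fintype m] [Fintype n] (A : Matrix m n ℝ) : ℝ := sigMax A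

/-- Condition number `κ(A) = σ_max(A)/σ_min(A)`. -/
def condNum {m n : Type*} [Fintype m] [Fintype n] (A : Matrix m n ℝ) : ℝ :=
  sigMax A / sigMin A

/-- Matrix exponential. -/
def matExp {d : ℕ} (A : Mat d) : Mat d := ∑' k : ℕ, ((k.factorial : ℝ))⁻¹ • A ^ k

/-- Column-wise vectorization: index `(j, i)` holds the `(i, j)` entry. -/
def vecM {d : ℕ} (A : Mat d) : Fin d × Fin d → ℝ := fun p => A p.2 p.1

/-- Inverse of the column-wise vectorization. -/
def matM {d : ℕ} (v : Fin d × Fin d → ℝ) : Mat d := Matrix.of fun i j => v (j, i)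

/-- The `d² × d²` diagonal 0/1 matrix `Low` with `Low (vec A) = vec (low A)`. -/
def lowOp (d : ℕ) : Matrix (Fin d × Fin d) (Fin d × Fin d) ℝ :=
  Matrix.diagonal fun p => if (p.1 : ℕ) < (p.2 : ℕ) then 1 else 0

/-- `P` is a valid `P_low` projector: `P Pᵀ = 1` and `Pᵀ P = Low`. -/
def IsPlow {d k : ℕ} (P : Matrix (Fin k) (Fin d × Fin d) ℝ) : Prop :=
  P * Pᵀ = 1 ∧ Pᵀ * P = lowOp d

/-- Orthogonal matrix. -/
def IsOrtho {d : ℕ} (U : Mat d) : Prop := Uᵀ * U = 1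

/-- Skew-symmetric matrix. -/
def IsSkew {d : ℕ} (X : Mat d) : Prop := Xᵀ = -X

/-- Matrix commutator. -/
def mcomm {d : ℕ} (A B : Mat d) : Mat d := A * B - B * A

/-- `U₀` is an exact joint triangularizer of the family `M`. -/
def ExactTriang {d N : ℕ} (U₀ : Mat d) (M : Fin N → Mat d) : Prop :=
  IsOrtho U₀ ∧ ∀ n, lowPart (U₀ᵀ * M n * U₀) = 0

/-- The joint triangularization loss `L(U) = Σₙ ‖low(Uᵀ M̂ₙ U)‖²`. -/
def Loss {d N : ℕ} (Mh : Fin N → Mat d) (U : Mat d) : ℝ :=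
  ∑ n, (frob (lowPart (Uᵀ * Mh n * U))) ^ 2

/-- Stationary point of the loss on the orthogonal group: the Riemannian
gradient vanishes, i.e. all directional derivatives along skew directions vanish. -/
def IsStationaryOrth {d N : ℕ} (Mh : Fin N → Mat d) (U : Mat d) : Prop :=
  IsOrtho U ∧ ∀ X : Mat d, IsSkew X →
    deriv (fun t : ℝ => Loss Mh (U * matExp (t • X))) 0 = 0

/-- The operator `t̃ = P_low (1 ⊗ Aᵀ − A ⊗ 1) P_lowᵀ`. -/
def ttil {d k : ℕ} (P : Matrix (Fin k) (Fin d × Fin d) ℝ) (A : Mat d) :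
    Matrix (Fin k) (Fin k) ℝ :=
  P * ((1 : Mat d) ⊗ₖ Aᵀ - A ⊗ₖ (1 : Mat d)) * Pᵀ

/-- The joint eigengap `γ = min_{i<i'} Σₙ (Λ_{ni} − Λ_{ni'})²`. -/
def gapMin {d N : ℕ} (Λ : Fin N → Fin d → ℝ) : ℝ :=
  sInf {r | ∃ i i' : Fin d, i < i' ∧ r = ∑ n, (Λ n i - Λ n i') ^ 2}


section AuxLemmas

lemma frob_nonneg {m n : Type*} [Fintype m] [Fintype n] (A : Matrix m n ℝ) : 0 ≤ frob A :=
  Real.sqrt_nonneg _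

lemma frob_sq {m n : Type*} [Fintype m] [Fintype n] (A : Matrix m n ℝ) :
    frob A ^ 2 = ∑ i, ∑ j, (A i j) ^ 2 := by
  apply Real.sq_sqrt; positivity

lemma frob_mono {m n : Type*} [Fintype m] [Fintype n] (A B : Matrix m n ℝ)
    (h : ∀ i j, (A i j)^2 ≤ (B i j)^2) : frob A ≤ frob B :=
  Real.sqrt_le_sqrt (Finset.sum_le_sum fun i _ => Finset.sum_le_sum fun j _ => h i j)

lemma frob_lowPart_le {d : ℕ} (A : Mat d) : frob (lowPart A) ≤ frob A := by
  apply frob_mono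
  intro i j
  simp only [lowPart, Matrix.of_apply]
  split
  · exact le_refl _
  · simpa using sq_nonneg (A i j)

lemma frob_eq_norm {m n : Type*} [Fintype m] [Fintype n] (A : Matrix m n ℝ) :
    frob A = ‖((WithLp.equiv 2 ((m × n) → ℝ)).symm fun p => A p.1 p.2 :
      EuclideanSpace ℝ (m × n))‖ := by
  rw [EuclideanSpace.norm_eq]
  unfold frob
  congr 1
  rw [Fintype.sum_prod_type]
  refine Finset.sum_congr rfl fun i _ => Finset.sum_congr rfl fun j _ => ?_
  simp [Real.norm_eq_abs, sq_abs]

lemma frob_add_le {m n : Type*} [Fintype m] [Fintype n] (A B : Matrix m n ℝ) :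
    frob (A + B) ≤ frob A + frob B := by
  rw [frob_eq_norm A, frob_eq_norm B, frob_eq_norm (A + B)]
  have : ((WithLp.equiv 2 ((m × n) → ℝ)).symm fun p => (A + B) p.1 p.2 :
      EuclideanSpace ℝ (m × n)) =
      ((WithLp.equiv 2 ((m × n) → ℝ)).symm fun p => A p.1 p.2) +
      ((WithLp.equiv 2 ((m × n) → ℝ)).symm fun p => B p.1 p.2) := by
    ext p; simp [Matrix.add_apply]
  rw [this]
  exact norm_add_le _ _

lemma frob_neg {m n : Type*} [Fintype m] [Fintype n] (A : Matrix m n ℝ) :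
    frob (-A) = frob A := by
  unfold frob
  congr 1
  refine Finset.sum_congr rfl fun i _ => Finset.sum_congr rfl fun j _ => ?_
  simp

lemma frob_sub_le {m n : Type*} [Fintype m] [Fintype n] (A B : Matrix m n ℝ) :
    frob (A - B) ≤ frob A + frob B := by
  rw [sub_eq_add_neg]
  calc frob (A + -B) ≤ frob A + frob (-B) := frob_add_le _ _
    _ = frob A + frob B := by rw [frob_neg]

lemma trace_abs_le {d : ℕ} (A B : Mat d) :
    |Matrix.trace (Aᵀ * B)| ≤ frob A * frob B := by
  have h : Matrix.trace (Aᵀ * B) = ∑ p : Fin d × Fin d, A p.1 p.2 * B p.1 p.2 := by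
    rw [Matrix.trace, Fintype.sum_prod_type]
    simp only [Matrix.diag, Matrix.mul_apply, Matrix.transpose_apply]
    rw [Finset.sum_comm]
  rw [h, ← Real.sqrt_sq_eq_abs]
  have cs := Finset.sum_mul_sq_le_sq_mul_sq Finset.univ
    (fun p : Fin d × Fin d => A p.1 p.2) (fun p => B p.1 p.2)
  calc Real.sqrt ((∑ p : Fin d × Fin d, A p.1 p.2 * B p.1 p.2) ^ 2)
      ≤ Real.sqrt ((∑ p : Fin d × Fin d, A p.1 p.2 ^ 2) *
          (∑ p : Fin d × Fin d, B p.1 p.2 ^ 2)) := Real.sqrt_le_sqrt cs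
    _ = frob A * frob B := by
        rw [Real.sqrt_mul (by positivity)]
        unfold frob
        congr 1 <;> · congr 1; rw [Fintype.sum_prod_type]

lemma frob_mul_le {d : ℕ} (A B : Mat d) : frob (A * B) ≤ frob A * frob B := by
  have h1 : frob (A*B) ^ 2 ≤ (frob A * frob B)^2 := by
    rw [frob_sq, mul_pow, frob_sq, frob_sq]
    calc ∑ i, ∑ j, ((A*B) i j)^2
        ≤ ∑ i, ∑ j, (∑ k, A i k ^2) * (∑ k, B k j ^2) := by
          refine Finset.sum_le_sum fun i _ => Finset.sum_le_sum fun j _ => ?_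
          have := Finset.sum_mul_sq_le_sq_mul_sq Finset.univ (fun k => A i k) (fun k => B k j)
          simpa [Matrix.mul_apply] using this
      _ = (∑ i, ∑ k, A i k ^2) * (∑ k, ∑ j, B k j ^2) := by
          simp_rw [← Finset.mul_sum]
          rw [← Finset.sum_mul]
          congr 1
          exact Finset.sum_comm
  have h2 := Real.sqrt_le_sqrt h1
  rwa [Real.sqrt_sq (frob_nonneg _),
    Real.sqrt_sq (mul_nonneg (frob_nonneg _) (frob_nonneg _))] at h2

lemma frob_mcomm_le {d : ℕ} (A B : Mat d) : frob (mcomm A B) ≤ 2 * frob A * frob B := by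
  unfold mcomm
  calc frob (A * B - B * A) ≤ frob (A * B) + frob (B * A) := frob_sub_le _ _
    _ ≤ frob A * frob B + frob B * frob A := add_le_add (frob_mul_le _ _) (frob_mul_le _ _)
    _ = 2 * frob A * frob B := by ring

lemma frob_sq_trace {d : ℕ} (A : Mat d) : frob A ^ 2 = Matrix.trace (Aᵀ * A) := by
  rw [frob_sq, Matrix.trace]
  simp only [Matrix.diag, Matrix.mul_apply, Matrix.transpose_apply]
  rw [Finset.sum_comm]
  refine Finset.sum_congr rfl fun i _ => Finset.sum_congr rfl fun j _ => ?_
  ring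

lemma frob_conj {d : ℕ} (U M : Mat d) (hU : IsOrtho U) :
    frob (Uᵀ * M * U) = frob M := by
  have hU2 : U * Uᵀ = 1 := mul_eq_one_comm.mp hU
  have h1 : frob (Uᵀ * M * U) ^ 2 = frob M ^ 2 := by
    rw [frob_sq_trace, frob_sq_trace]
    have hmat : (Uᵀ * M * U)ᵀ * (Uᵀ * M * U) = Uᵀ * (Mᵀ * M) * U := by
      have : (Uᵀ * M * U)ᵀ = Uᵀ * Mᵀ * U := by
        simp [Matrix.transpose_mul, Matrix.mul_assoc]
      rw [this]
      calc Uᵀ * Mᵀ * U * (Uᵀ * M * U)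
          = Uᵀ * Mᵀ * (U * Uᵀ) * M * U := by
            simp only [Matrix.mul_assoc]
        _ = Uᵀ * (Mᵀ * M) * U := by rw [hU2]; simp only [Matrix.mul_assoc, Matrix.one_mul]
    rw [hmat, Matrix.trace_mul_cycle, hU2, Matrix.one_mul]
  have h2 := congrArg Real.sqrt h1
  rwa [Real.sqrt_sq (frob_nonneg _), Real.sqrt_sq (frob_nonneg _)] at h2

end AuxLemmas

/-- upper bounds on the second-order trace terms appearing in
the Hessian expansion. -/
theorem hessian_trace_bounds {d N : ℕ} (M : Fin N → Mat d) (U₀ : Mat d)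
    (hU₀ : ExactTriang U₀ M)
    (X Y : Mat d) (hX : IsSkew X) (hY : IsSkew Y) (hYn : frob Y = 1) :
    |∑ n, Matrix.trace ((lowPart (mcomm (U₀ᵀ * M n * U₀) X))ᵀ *
        lowPart (mcomm (mcomm (U₀ᵀ * M n * U₀) Y) X))| ≤
      8 * frob X ^ 2 * ∑ n, frob (M n) ^ 2 ∧
    |∑ n, Matrix.trace ((lowPart (mcomm (mcomm (U₀ᵀ * M n * U₀) X) X))ᵀ *
        lowPart (mcomm (U₀ᵀ * M n * U₀) Y))| ≤
      8 * frob X ^ 2 * ∑ n, frob (M n) ^ 2 := by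
  obtain ⟨hOrtho, -⟩ := hU₀
  have hX0 : (0:ℝ) ≤ frob X := frob_nonneg _
  have hsum : ∀ (f : Fin N → Mat d × Mat d),
      (∀ n, |Matrix.trace ((f n).1ᵀ * (f n).2)| ≤ 8 * frob X ^ 2 * frob (M n) ^ 2) →
      |∑ n, Matrix.trace ((f n).1ᵀ * (f n).2)| ≤ 8 * frob X ^ 2 * ∑ n, frob (M n) ^ 2 := by
    intro f hf
    calc |∑ n, Matrix.trace ((f n).1ᵀ * (f n).2)|
        ≤ ∑ n, |Matrix.trace ((f n).1ᵀ * (f n).2)| := Finset.abs_sum_le_sum_abs _ _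
      _ ≤ ∑ n, 8 * frob X ^ 2 * frob (M n) ^ 2 :=
          Finset.sum_le_sum fun n _ => hf n
      _ = 8 * frob X ^ 2 * ∑ n, frob (M n) ^ 2 := by rw [Finset.mul_sum]
  constructor
  · refine hsum (fun n => (lowPart (mcomm (U₀ᵀ * M n * U₀) X),
      lowPart (mcomm (mcomm (U₀ᵀ * M n * U₀) Y) X))) (fun n => ?_)
    set T := U₀ᵀ * M n * U₀ with hTdef
    have hT : frob T = frob (M n) := frob_conj _ _ hOrtho
    have hM0 : (0:ℝ) ≤ frob (M n) := frob_nonneg _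
    have h1 : frob (lowPart (mcomm T X)) ≤ 2 * frob (M n) * frob X := by
      calc frob (lowPart (mcomm T X)) ≤ frob (mcomm T X) := frob_lowPart_le _
        _ ≤ 2 * frob T * frob X := frob_mcomm_le _ _
        _ = 2 * frob (M n) * frob X := by rw [hT]
    have h2 : frob (lowPart (mcomm (mcomm T Y) X)) ≤ 4 * frob (M n) * frob X := by
      have hTY : frob (mcomm T Y) ≤ 2 * frob (M n) := by
        have := frob_mcomm_le T Y
        rwa [hT, hYn, mul_one] at this
      calc frob (lowPart (mcomm (mcomm T Y) X)) ≤ frob (mcomm (mcomm T Y) X) :=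
            frob_lowPart_le _
        _ ≤ 2 * frob (mcomm T Y) * frob X := frob_mcomm_le _ _
        _ ≤ 2 * (2 * frob (M n)) * frob X := by nlinarith [frob_nonneg (mcomm T Y)]
        _ = 4 * frob (M n) * frob X := by ring
    calc |Matrix.trace ((lowPart (mcomm T X))ᵀ * lowPart (mcomm (mcomm T Y) X))|
        ≤ frob (lowPart (mcomm T X)) * frob (lowPart (mcomm (mcomm T Y) X)) :=
          trace_abs_le _ _
      _ ≤ 8 * frob X ^ 2 * frob (M n) ^ 2 := by
          nlinarith [frob_nonneg (lowPart (mcomm T X)),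
            frob_nonneg (lowPart (mcomm (mcomm T Y) X))]
  · refine hsum (fun n => (lowPart (mcomm (mcomm (U₀ᵀ * M n * U₀) X) X),
      lowPart (mcomm (U₀ᵀ * M n * U₀) Y))) (fun n => ?_)
    set T := U₀ᵀ * M n * U₀ with hTdef
    have hT : frob T = frob (M n) := frob_conj _ _ hOrtho
    have hM0 : (0:ℝ) ≤ frob (M n) := frob_nonneg _
    have h1 : frob (lowPart (mcomm (mcomm T X) X)) ≤ 4 * frob (M n) * frob X ^ 2 := by
      have hTX : frob (mcomm T X) ≤ 2 * frob (M n) * frob X := by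
        have := frob_mcomm_le T X
        rwa [hT] at this
      calc frob (lowPart (mcomm (mcomm T X) X)) ≤ frob (mcomm (mcomm T X) X) :=
            frob_lowPart_le _
        _ ≤ 2 * frob (mcomm T X) * frob X := frob_mcomm_le _ _
        _ ≤ 2 * (2 * frob (M n) * frob X) * frob X := by
            nlinarith [frob_nonneg (mcomm T X)]
        _ = 4 * frob (M n) * frob X ^ 2 := by ring
    have h2 : frob (lowPart (mcomm T Y)) ≤ 2 * frob (M n) := by
      calc frob (lowPart (mcomm T Y)) ≤ frob (mcomm T Y) := frob_lowPart_le _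
        _ ≤ 2 * frob T * frob Y := frob_mcomm_le _ _
        _ = 2 * frob (M n) := by rw [hT, hYn, mul_one]
    calc |Matrix.trace ((lowPart (mcomm (mcomm T X) X))ᵀ * lowPart (mcomm T Y))|
        ≤ frob (lowPart (mcomm (mcomm T X) X)) * frob (lowPart (mcomm T Y)) :=
          trace_abs_le _ _
      _ ≤ 8 * frob X ^ 2 * frob (M n) ^ 2 := by
          nlinarith [frob_nonneg (lowPart (mcomm (mcomm T X) X)),
            frob_nonneg (lowPart (mcomm T Y))]
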